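/- There exists a constant c > 1 such that for all odd integers m, n with 1 ≤ m < n, one has ℓ(X_{m,m} ∩ X_{n,n}) < c·ℓ(X_{m,m})·ℓ(X_{n,n}); that is, the sets X_{n,n} (n odd) are pairwise almost independent with respect to Lebesgue measure. -/

import Mathlib

open MeasureTheory

/-- The Gauss map `G(x) = 1/x - ⌊1/x⌋`. -/
noncomputable def gaussMap (x : ℝ) : ℝ := Int.fract x⁻¹

/-- The `m`-th continued fraction digit `a_m(x) = ⌊1 / G^{m-1}(x)⌋` (for `m ≥ 1`). -/
noncomputable def cfDigit (m : ℕ) (x : ℝ) : ℤ := ⌊(gaussMap^[m - 1] x)⁻¹⌋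

/-- `X_{m,n}`: the set of irrational `x ∈ (0,1)` whose `m`-th continued fraction
digit exceeds `n`. -/
def cfSet (m n : ℕ) : Set ℝ :=
  {x | x ∈ Set.Ioo (0 : ℝ) 1 ∧ Irrational x ∧ (n : ℤ) < cfDigit m x}

namespace CFAux

open Set Filter

/-- The (unnormalized) Gauss measure. -/
noncomputable def mu : Measure ℝ := volume.withDensity (fun x => ENNReal.ofReal (1 + x)⁻¹)

/-- The preimage-within-(0,1) operator. -/
def P (B : Set ℝ) : Set ℝ := Set.Ioo 0 1 ∩ gaussMap ⁻¹' B

/-- Inverse branch of the Gauss map with digit `j+1`. -/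
noncomputable def br (j : ℕ) (t : ℝ) : ℝ := ((j : ℝ) + 1 + t)⁻¹

lemma measurable_gaussMap : Measurable gaussMap :=
  measurable_fract.comp measurable_inv

lemma P_subset (B : Set ℝ) : P B ⊆ Set.Ioo 0 1 := Set.inter_subset_left

lemma P_meas {B : Set ℝ} (hB : MeasurableSet B) : MeasurableSet (P B) :=
  measurableSet_Ioo.inter (measurable_gaussMap hB)

lemma br_image {B : Set ℝ} (hB1 : B ⊆ Set.Ioo 0 1) (j : ℕ) :
    br j '' B = P B ∩ Set.Ioo ((j : ℝ) + 2)⁻¹ ((j : ℝ) + 1)⁻¹ := by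
  have ha : (0:ℝ) < (j:ℝ) + 1 := by positivity
  have ha2 : (0:ℝ) < (j:ℝ) + 2 := by positivity
  ext x
  simp only [br, Set.mem_image, P, Set.mem_inter_iff, Set.mem_preimage, Set.mem_Ioo]
  constructor
  · rintro ⟨t, htB, rfl⟩
    obtain ⟨ht0, ht1⟩ := hB1 htB
    have hpos : (0:ℝ) < (j:ℝ) + 1 + t := by linarith
    have hG : gaussMap (((j:ℝ) + 1 + t)⁻¹) = t := by
      rw [gaussMap, inv_inv]
      have he : ((j:ℝ) + 1 + t) = ((j+1 : ℤ) : ℝ) + t := by push_cast; ring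
      rw [he, Int.fract_intCast_add, Int.fract_eq_self.2 ⟨le_of_lt ht0, ht1⟩]
    refine ⟨⟨⟨by positivity, ?_⟩, by rw [hG]; exact htB⟩, ?_, ?_⟩
    · exact inv_lt_one_of_one_lt₀ (by linarith)
    · exact (inv_lt_inv₀ ha2 hpos).2 (by linarith)
    · exact (inv_lt_inv₀ hpos ha).2 (by linarith)
  · rintro ⟨⟨⟨hx0, hx1⟩, hGx⟩, hlo, hhi⟩
    have h1 : (j:ℝ) + 1 < x⁻¹ := (lt_inv_comm₀ hx0 ha).1 hhi
    have h2 : x⁻¹ < (j:ℝ) + 2 := (inv_lt_comm₀ ha2 hx0).1 hlo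
    refine ⟨x⁻¹ - ((j:ℝ)+1), ?_, ?_⟩
    · have hfl : ⌊x⁻¹⌋ = (j:ℤ) + 1 := by
        rw [Int.floor_eq_iff]
        constructor
        · push_cast; linarith
        · push_cast; linarith
      have hGeq : gaussMap x = x⁻¹ - ((j:ℝ)+1) := by
        rw [gaussMap, Int.fract, hfl]
        push_cast; ring
      rwa [← hGeq]
    · have he : (j:ℝ) + 1 + (x⁻¹ - ((j:ℝ)+1)) = x⁻¹ := by ring
      rw [he, inv_inv]

lemma cover {B : Set ℝ} (hB1 : B ⊆ Set.Ioo 0 1) :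
    P B ⊆ (⋃ j : ℕ, br j '' B) ∪ (⋃ j : ℕ, {(((j : ℝ) + 1)⁻¹ : ℝ)}) := by
  intro x hx
  obtain ⟨⟨hx0, hx1⟩, hGx⟩ := hx
  have h1x : (1:ℝ) < x⁻¹ := by
    have := (inv_lt_inv₀ one_pos hx0).2 hx1
    simpa using this
  set k := ⌊x⁻¹⌋ with hk
  have hk1 : 1 ≤ k := by
    rw [hk]
    exact Int.le_floor.2 (by exact_mod_cast h1x.le)
  set j := k.toNat - 1 with hj
  have hkj : ((j:ℝ) + 1) = (k:ℝ) := by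
    have : (j + 1 : ℕ) = k.toNat := by omega
    have h2 : ((j:ℤ) + 1) = k := by omega
    exact_mod_cast congrArg (Int.cast : ℤ → ℝ) h2
  by_cases hx_eq : x = ((j:ℝ)+1)⁻¹
  · right
    exact Set.mem_iUnion.2 ⟨j, by simp [hx_eq]⟩
  · left
    refine Set.mem_iUnion.2 ⟨j, ?_⟩
    rw [br_image hB1 j]
    have hjpos : (0:ℝ) < (j:ℝ) + 1 := by positivity
    have hfloor : ((j:ℝ) + 1) ≤ x⁻¹ := by rw [hkj]; exact Int.floor_le x⁻¹
    have hlt : x⁻¹ < (j:ℝ) + 2 := by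
      have := Int.lt_floor_add_one x⁻¹
      rw [← hk] at this
      rw [show ((j:ℝ)+2) = ((k:ℝ)+1) from by rw [← hkj]; ring]
      exact this
    refine ⟨⟨⟨hx0, hx1⟩, hGx⟩, ?_, ?_⟩
    · exact (inv_lt_comm₀ hx0 (by positivity)).1 hlt
    · exact lt_of_le_of_ne ((le_inv_comm₀ hx0 hjpos).2 hfloor) hx_eq

lemma mu_br_image {B : Set ℝ} (hB : MeasurableSet B) (hB1 : B ⊆ Set.Ioo 0 1) (j : ℕ) :
    mu (br j '' B) = ∫⁻ t in B, ENNReal.ofReal ((((j : ℝ) + 1 + t) * ((j : ℝ) + 2 + t))⁻¹) := by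
  have hmeas : MeasurableSet (br j '' B) := by
    rw [br_image hB1 j]; exact (P_meas hB).inter measurableSet_Ioo
  rw [mu, withDensity_apply _ hmeas]
  have hder : ∀ t ∈ B, HasFDerivWithinAt (br j)
      ((1 : ℝ →L[ℝ] ℝ).smulRight (-((((j:ℝ) + 1 + t)^2)⁻¹))) B t := by
    intro t ht
    have ht0 := (hB1 ht).1
    have hne : ((j:ℝ) + 1 + t) ≠ 0 := by positivity
    have h1 : HasDerivAt (fun s : ℝ => (j:ℝ) + 1 + s) 1 t := (hasDerivAt_id t).const_add _
    have h2 := h1.inv hne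
    have h3 : HasDerivAt (br j) (-((((j:ℝ) + 1 + t)^2)⁻¹)) t := by
      exact h2.congr_deriv (by ring)
    exact h3.hasDerivWithinAt.hasFDerivWithinAt
  have hinj : Set.InjOn (br j) B := by
    intro a _ b _ h
    have := inv_injective h
    linarith
  rw [lintegral_image_eq_lintegral_abs_det_fderiv_mul volume hB hder hinj]
  apply setLIntegral_congr_fun_ae hB
  apply ae_of_all
  intro t ht
  obtain ⟨ht0, ht1⟩ := hB1 ht
  have h1 : (0:ℝ) < (j:ℝ) + 1 + t := by positivity
  rw [ContinuousLinearMap.smulRight_one_eq_toSpanSingleton,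
    ContinuousLinearMap.det_toSpanSingleton, br, abs_neg, abs_inv, abs_of_pos (by positivity),
    ← ENNReal.ofReal_mul (by positivity)]
  congr 1
  have hne : ((j:ℝ) + 1 + t) ≠ 0 := ne_of_gt h1
  have hne2 : ((j:ℝ) + 2 + t) ≠ 0 := by positivity
  have h2 : (1 + ((j:ℝ)+1+t)⁻¹) = ((j:ℝ)+2+t) / ((j:ℝ)+1+t) := by
    field_simp
    ring
  rw [h2]
  field_simp

lemma telescope (a : ℝ) (ha : 0 ≤ a) :
    ∑' j : ℕ, ENNReal.ofReal (((a + ((j : ℝ) + 1)) * (a + ((j : ℝ) + 2)))⁻¹)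
      = ENNReal.ofReal (a + 1)⁻¹ := by
  set f : ℕ → ℝ := fun j => ((a + ((j:ℝ)+1)) * (a + ((j:ℝ)+2)))⁻¹ with hf
  have hpos : ∀ j : ℕ, (0:ℝ) < a + ((j:ℝ)+1) := fun j => by positivity
  have hpos2 : ∀ j : ℕ, (0:ℝ) < a + ((j:ℝ)+2) := fun j => by positivity
  have hfe : ∀ j : ℕ, f j = (a + ((j:ℝ)+1))⁻¹ - (a + ((j:ℝ)+2))⁻¹ := by
    intro j
    have h1 := (hpos j).ne'
    have h2 := (hpos2 j).ne'
    rw [hf]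
    field_simp
    ring
  have hnn : ∀ j, 0 ≤ f j := fun j => le_of_lt (by rw [hf]; positivity)
  have hsum : HasSum f (a+1)⁻¹ := by
    rw [hasSum_iff_tendsto_nat_of_nonneg hnn]
    have hps : ∀ n : ℕ, ∑ i ∈ Finset.range n, f i = (a+1)⁻¹ - (a + ((n:ℝ)+1))⁻¹ := by
      intro n
      induction n with
      | zero => simp
      | succ n ih =>
        rw [Finset.sum_range_succ, ih, hfe n]
        push_cast
        ring
    simp only [hps]
    have htend : Tendsto (fun n : ℕ => (a + ((n:ℝ)+1))⁻¹) atTop (nhds 0) := by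
      apply Filter.Tendsto.comp tendsto_inv_atTop_zero
      apply tendsto_atTop_add_const_left
      apply tendsto_atTop_add_const_right
      exact tendsto_natCast_atTop_atTop
    simpa using tendsto_const_nhds.sub htend
  rw [← ENNReal.ofReal_tsum_of_nonneg hnn hsum.summable, hsum.tsum_eq]

lemma mu_null_countable {E : Set ℝ} (hE : E.Countable) : mu E = 0 := by
  rw [mu]
  exact (withDensity_absolutelyContinuous volume _) (hE.measure_zero volume)

lemma mu_P {B : Set ℝ} (hB : MeasurableSet B) (hB1 : B ⊆ Set.Ioo 0 1) : mu (P B) = mu B := by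
  have hmeasb : ∀ j : ℕ, MeasurableSet (br j '' B) := fun j => by
    rw [br_image hB1 j]; exact (P_meas hB).inter measurableSet_Ioo
  have hbnd : ∀ j : ℕ, br j '' B ⊆ Set.Ioo ((j : ℝ) + 2)⁻¹ ((j : ℝ) + 1)⁻¹ := by
    intro j
    rw [br_image hB1 j]
    exact Set.inter_subset_right
  have hdisj : Pairwise (Function.onFun Disjoint fun j : ℕ => br j '' B) := by
    have key : ∀ i k : ℕ, i < k → Disjoint (br i '' B) (br k '' B) := by
      intro i k hik
      rw [Set.disjoint_left]
      intro x hxi hxk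
      obtain ⟨hi1, -⟩ := hbnd i hxi
      obtain ⟨-, hk2⟩ := hbnd k hxk
      have hle : ((i:ℝ) + 2) ≤ (k:ℝ) + 1 := by
        have : (i:ℝ) + 1 ≤ (k:ℝ) := by exact_mod_cast hik
        linarith
      have : ((k:ℝ)+1)⁻¹ ≤ ((i:ℝ)+2)⁻¹ := (inv_le_inv₀ (by positivity) (by positivity)).2 hle
      linarith
    intro i k hik
    rcases lt_or_gt_of_ne hik with h | h
    · exact key i k h
    · exact (key k i h).symm
  have hunion_sub : (⋃ j, br j '' B) ⊆ P B := by
    intro x hx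
    obtain ⟨j, hj⟩ := Set.mem_iUnion.1 hx
    rw [br_image hB1 j] at hj
    exact hj.1
  have h1 : mu (P B) = ∑' j, mu (br j '' B) := by
    apply le_antisymm
    · calc mu (P B) ≤ mu ((⋃ j, br j '' B) ∪ (⋃ j : ℕ, {(((j:ℝ)+1)⁻¹:ℝ)})) :=
            measure_mono (cover hB1)
        _ ≤ mu (⋃ j, br j '' B) + mu (⋃ j : ℕ, {(((j:ℝ)+1)⁻¹:ℝ)}) := measure_union_le _ _
        _ = mu (⋃ j, br j '' B) := by
            rw [mu_null_countable (Set.countable_iUnion fun j => Set.countable_singleton _),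
              add_zero]
        _ = ∑' j, mu (br j '' B) := measure_iUnion hdisj hmeasb
    · rw [← measure_iUnion hdisj hmeasb]
      exact measure_mono hunion_sub
  rw [h1]
  have h2 : ∀ j : ℕ, mu (br j '' B)
      = ∫⁻ t in B, ENNReal.ofReal (((t + ((j:ℝ)+1)) * (t + ((j:ℝ)+2)))⁻¹) := by
    intro j
    rw [mu_br_image hB hB1 j]
    apply setLIntegral_congr_fun_ae hB
    apply ae_of_all
    intro t ht
    congr 2
    ring
  simp only [h2]
  have hmeasint : ∀ j : ℕ, AEMeasurable
      (fun t : ℝ => ENNReal.ofReal (((t + ((j:ℝ)+1)) * (t + ((j:ℝ)+2)))⁻¹))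
      (volume.restrict B) :=
    fun j => ((((measurable_id.add_const _).mul
      (measurable_id.add_const _)).inv).ennreal_ofReal).aemeasurable
  rw [← lintegral_tsum hmeasint]
  rw [mu, withDensity_apply _ hB]
  apply setLIntegral_congr_fun_ae hB
  apply ae_of_all
  intro t ht
  have ht0 : (0:ℝ) ≤ t := le_of_lt (hB1 ht).1
  rw [telescope t ht0, add_comm]

lemma P_iter_subset {B : Set ℝ} (hB1 : B ⊆ Set.Ioo 0 1) (k : ℕ) : P^[k] B ⊆ Set.Ioo 0 1 := by
  cases k with
  | zero => exact hB1
  | succ k => rw [Function.iterate_succ_apply']; exact P_subset _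

lemma P_iter_meas {B : Set ℝ} (hB : MeasurableSet B) (k : ℕ) : MeasurableSet (P^[k] B) := by
  induction k with
  | zero => exact hB
  | succ k ih => rw [Function.iterate_succ_apply']; exact P_meas ih

lemma mu_P_iter {B : Set ℝ} (hB : MeasurableSet B) (hB1 : B ⊆ Set.Ioo 0 1) (k : ℕ) :
    mu (P^[k] B) = mu B := by
  induction k with
  | zero => rfl
  | succ k ih =>
    rw [Function.iterate_succ_apply', mu_P (P_iter_meas hB k) (P_iter_subset hB1 k), ih]

lemma mu_le_vol {E : Set ℝ} (hE : MeasurableSet E) (hE1 : E ⊆ Set.Ioo 0 1) :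
    mu E ≤ volume E := by
  rw [mu, withDensity_apply _ hE]
  calc ∫⁻ x in E, ENNReal.ofReal (1+x)⁻¹ ≤ ∫⁻ _x in E, 1 := by
        apply setLIntegral_mono' hE
        intro x hx
        have h0 := (hE1 hx).1
        have : ((1:ℝ)+x)⁻¹ ≤ 1 := inv_le_one_of_one_le₀ (by linarith)
        calc ENNReal.ofReal (1+x)⁻¹ ≤ ENNReal.ofReal 1 := ENNReal.ofReal_le_ofReal this
          _ = 1 := ENNReal.ofReal_one
    _ = volume E := setLIntegral_one E

lemma half_vol_le_mu {E : Set ℝ} (hE : MeasurableSet E) (hE1 : E ⊆ Set.Ioo 0 1) :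
    ENNReal.ofReal 2⁻¹ * volume E ≤ mu E := by
  rw [mu, withDensity_apply _ hE]
  calc ENNReal.ofReal 2⁻¹ * volume E = ∫⁻ _x in E, ENNReal.ofReal 2⁻¹ := by
        rw [setLIntegral_const]
    _ ≤ ∫⁻ x in E, ENNReal.ofReal (1+x)⁻¹ := by
        apply setLIntegral_mono' hE
        intro x hx
        obtain ⟨h0, h1⟩ := hE1 hx
        apply ENNReal.ofReal_le_ofReal
        exact (inv_le_inv₀ two_pos (by linarith)).2 (by linarith)

lemma vol_le_two_mu {E : Set ℝ} (hE : MeasurableSet E) (hE1 : E ⊆ Set.Ioo 0 1) :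
    volume E ≤ ENNReal.ofReal 2 * mu E := by
  have h := half_vol_le_mu hE hE1
  have h2 : (ENNReal.ofReal 2) * (ENNReal.ofReal 2⁻¹) = 1 := by
    rw [← ENNReal.ofReal_mul (by norm_num)]
    norm_num
  calc volume E = (ENNReal.ofReal 2 * ENNReal.ofReal 2⁻¹) * volume E := by rw [h2, one_mul]
    _ = ENNReal.ofReal 2 * (ENNReal.ofReal 2⁻¹ * volume E) := by rw [mul_assoc]
    _ ≤ ENNReal.ofReal 2 * mu E := mul_le_mul_right h _

lemma key_bound {C : Set ℝ} (hC : MeasurableSet C) (hC1 : C ⊆ Set.Ioo 0 1) (m : ℕ)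
    (hm : 1 ≤ m) :
    mu (Set.Ioo 0 ((m : ℝ) + 1)⁻¹ ∩ P C) ≤ ENNReal.ofReal ((m : ℝ) + 1)⁻¹ * volume C := by
  have hsub : Set.Ioo 0 ((m:ℝ)+1)⁻¹ ∩ P C ⊆
      (⋃ j : ℕ, br (m + j) '' C) ∪ (⋃ j : ℕ, {(((j:ℝ)+1)⁻¹ : ℝ)}) := by
    rintro x ⟨hxA, hxP⟩
    rcases cover hC1 hxP with h | h
    · obtain ⟨j, hj⟩ := Set.mem_iUnion.1 h
      rw [br_image hC1 j] at hj
      obtain ⟨-, hx_gt, hx_lt⟩ := hj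
      have hjm : m ≤ j := by
        by_contra hlt
        push_neg at hlt
        have hj1 : (j + 1 : ℕ) ≤ m := hlt
        have hle : ((j:ℝ)+2) ≤ (m:ℝ)+1 := by
          have : ((j:ℝ) + 1) ≤ (m:ℝ) := by exact_mod_cast hj1
          linarith
        have h2 : ((m:ℝ)+1)⁻¹ ≤ ((j:ℝ)+2)⁻¹ := (inv_le_inv₀ (by positivity) (by positivity)).2 hle
        have := hxA.2
        linarith
      left
      refine Set.mem_iUnion.2 ⟨j - m, ?_⟩
      rw [show m + (j - m) = j from by omega, br_image hC1 j]
      exact ⟨hxP, hx_gt, hx_lt⟩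
    · right; exact h
  have hmeasb : ∀ j : ℕ, MeasurableSet (br (m+j) '' C) := fun j => by
    rw [br_image hC1 _]; exact (P_meas hC).inter measurableSet_Ioo
  calc mu (Set.Ioo 0 ((m:ℝ)+1)⁻¹ ∩ P C)
      ≤ mu ((⋃ j : ℕ, br (m + j) '' C) ∪ (⋃ j : ℕ, {(((j:ℝ)+1)⁻¹ : ℝ)})) :=
        measure_mono hsub
    _ ≤ mu (⋃ j : ℕ, br (m + j) '' C) + mu (⋃ j : ℕ, {(((j:ℝ)+1)⁻¹ : ℝ)}) :=
        measure_union_le _ _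
    _ = mu (⋃ j : ℕ, br (m + j) '' C) := by
        rw [mu_null_countable (Set.countable_iUnion fun j => Set.countable_singleton _), add_zero]
    _ ≤ ∑' j : ℕ, mu (br (m + j) '' C) := measure_iUnion_le _
    _ ≤ ∑' j : ℕ, ENNReal.ofReal ((((m:ℝ) + ((j:ℝ)+1)) * ((m:ℝ) + ((j:ℝ)+2)))⁻¹) * volume C := by
        apply ENNReal.tsum_le_tsum
        intro j
        rw [mu_br_image hC hC1 (m+j)]
        calc ∫⁻ t in C, ENNReal.ofReal (((((m+j:ℕ):ℝ)+1+t) * (((m+j:ℕ):ℝ)+2+t))⁻¹)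
            ≤ ∫⁻ _t in C, ENNReal.ofReal ((((m:ℝ) + ((j:ℝ)+1)) * ((m:ℝ) + ((j:ℝ)+2)))⁻¹) := by
              apply setLIntegral_mono' hC
              intro t ht
              obtain ⟨ht0, -⟩ := hC1 ht
              apply ENNReal.ofReal_le_ofReal
              have hcast : ((m+j:ℕ):ℝ) = (m:ℝ) + (j:ℝ) := by push_cast; ring
              rw [hcast]
              apply (inv_le_inv₀ (by positivity) (by positivity)).2
              nlinarith
          _ = ENNReal.ofReal ((((m:ℝ) + ((j:ℝ)+1)) * ((m:ℝ) + ((j:ℝ)+2)))⁻¹) * volume C :=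
              setLIntegral_const _ _
    _ = (∑' j : ℕ, ENNReal.ofReal ((((m:ℝ) + ((j:ℝ)+1)) * ((m:ℝ) + ((j:ℝ)+2)))⁻¹)) * volume C :=
        ENNReal.tsum_mul_right
    _ = ENNReal.ofReal ((m:ℝ)+1)⁻¹ * volume C := by
        rw [telescope (m:ℝ) (by positivity)]

lemma gauss_irrational {x : ℝ} (hx : Irrational x) (hx1 : x ∈ Set.Ioo (0:ℝ) 1) :
    Irrational (gaussMap x) ∧ gaussMap x ∈ Set.Ioo (0:ℝ) 1 := by
  have hinv : Irrational x⁻¹ := hx.inv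
  have hG : Irrational (gaussMap x) := by
    rw [gaussMap, Int.fract]
    exact hinv.sub_intCast _
  refine ⟨hG, lt_of_le_of_ne (Int.fract_nonneg _) (Ne.symm hG.ne_zero), Int.fract_lt_one _⟩

lemma gauss_iter_irrational {x : ℝ} (hx : Irrational x) (hx1 : x ∈ Set.Ioo (0:ℝ) 1) (k : ℕ) :
    Irrational (gaussMap^[k] x) ∧ gaussMap^[k] x ∈ Set.Ioo (0:ℝ) 1 := by
  induction k with
  | zero => exact ⟨hx, hx1⟩
  | succ k ih =>
    rw [Function.iterate_succ_apply']
    exact gauss_irrational ih.1 ih.2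

lemma mem_P_iter_iff {x : ℝ} (hx : Irrational x) (hx1 : x ∈ Set.Ioo (0:ℝ) 1) (k : ℕ)
    (B : Set ℝ) : x ∈ P^[k] B ↔ gaussMap^[k] x ∈ B := by
  induction k generalizing B with
  | zero => simp
  | succ k ih =>
    rw [Function.iterate_succ_apply, Function.iterate_succ_apply', ih (P B)]
    obtain ⟨hyirr, hy1⟩ := gauss_iter_irrational hx hx1 k
    constructor
    · rintro ⟨-, h⟩; exact h
    · intro h; exact ⟨hy1, h⟩

lemma digit_lt_iff {y : ℝ} (hy : Irrational y) (hy1 : y ∈ Set.Ioo (0:ℝ) 1) (n : ℕ) :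
    (n : ℤ) < ⌊y⁻¹⌋ ↔ y < ((n : ℝ) + 1)⁻¹ := by
  obtain ⟨hy0, _⟩ := hy1
  have hn : (0:ℝ) < (n:ℝ) + 1 := by positivity
  constructor
  · intro h
    have h1 : (n:ℤ) + 1 ≤ ⌊y⁻¹⌋ := h
    have h2 : (((n:ℤ) + 1 : ℤ) : ℝ) ≤ y⁻¹ := Int.le_floor.1 h1
    have h3 : ((n:ℝ) + 1) ≤ y⁻¹ := by push_cast at h2; linarith
    have hle : y ≤ ((n:ℝ)+1)⁻¹ := (le_inv_comm₀ hy0 hn).2 h3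
    have hne : y ≠ ((n:ℝ)+1)⁻¹ := by
      have : ((n:ℝ)+1)⁻¹ = (((((n:ℚ))+1)⁻¹ : ℚ) : ℝ) := by push_cast; ring
      rw [this]
      exact hy.ne_rat _
    exact lt_of_le_of_ne hle hne
  · intro h
    have h' : ((n:ℝ)+1) ≤ y⁻¹ := (le_inv_comm₀ hn hy0).2 h.le
    have : ((n:ℤ) + 1 : ℤ) ≤ ⌊y⁻¹⌋ := Int.le_floor.2 (by push_cast; linarith)
    omega

lemma A_subset (n : ℕ) : Set.Ioo (0:ℝ) ((n : ℝ) + 1)⁻¹ ⊆ Set.Ioo 0 1 := by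
  rintro x ⟨h0, h1⟩
  refine ⟨h0, lt_of_lt_of_le h1 ?_⟩
  apply inv_le_one_of_one_le₀
  have : (0:ℝ) ≤ (n:ℝ) := Nat.cast_nonneg n
  linarith

lemma cfSet_eq (m n : ℕ) (hm : 1 ≤ m) :
    cfSet m n = P^[m-1] (Set.Ioo 0 ((n : ℝ) + 1)⁻¹) ∩ {x | Irrational x} := by
  ext x
  simp only [cfSet, Set.mem_setOf_eq, Set.mem_inter_iff]
  constructor
  · rintro ⟨hx1, hirr, hdig⟩
    refine ⟨?_, hirr⟩
    rw [mem_P_iter_iff hirr hx1]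
    obtain ⟨hyirr, hy1⟩ := gauss_iter_irrational hirr hx1 (m-1)
    have := (digit_lt_iff hyirr hy1 n).1 hdig
    exact ⟨hy1.1, this⟩
  · rintro ⟨hP, hirr⟩
    have hx1 : x ∈ Set.Ioo (0:ℝ) 1 := P_iter_subset (A_subset n) (m-1) hP
    rw [mem_P_iter_iff hirr hx1] at hP
    obtain ⟨hyirr, hy1⟩ := gauss_iter_irrational hirr hx1 (m-1)
    exact ⟨hx1, hirr, (digit_lt_iff hyirr hy1 n).2 hP.2⟩

lemma inter_eq {m n : ℕ} (hm : 1 ≤ m) (hmn : m < n) :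
    cfSet m m ∩ cfSet n n =
      P^[m-1] (Set.Ioo 0 ((m : ℝ) + 1)⁻¹ ∩ P^[n-m] (Set.Ioo 0 ((n : ℝ) + 1)⁻¹))
        ∩ {x | Irrational x} := by
  have hAm := A_subset m
  have hsubD : Set.Ioo 0 ((m:ℝ)+1)⁻¹ ∩ P^[n-m] (Set.Ioo 0 ((n:ℝ)+1)⁻¹) ⊆ Set.Ioo (0:ℝ) 1 :=
    fun y hy => hAm hy.1
  rw [cfSet_eq m m hm, cfSet_eq n n (le_trans hm hmn.le)]
  ext x
  simp only [Set.mem_inter_iff, Set.mem_setOf_eq]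
  constructor
  · rintro ⟨⟨hPm, hirr⟩, ⟨hPn, -⟩⟩
    have hx1 : x ∈ Set.Ioo (0:ℝ) 1 := P_iter_subset hAm (m-1) hPm
    refine ⟨?_, hirr⟩
    rw [mem_P_iter_iff hirr hx1] at hPm hPn ⊢
    obtain ⟨hyirr, hy1⟩ := gauss_iter_irrational hirr hx1 (m-1)
    refine ⟨hPm, ?_⟩
    rw [mem_P_iter_iff hyirr hy1, ← Function.iterate_add_apply,
      show n - m + (m-1) = n - 1 from by omega]
    exact hPn
  · rintro ⟨hP, hirr⟩
    have hx1 : x ∈ Set.Ioo (0:ℝ) 1 := P_iter_subset hsubD (m-1) hP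
    rw [mem_P_iter_iff hirr hx1] at hP
    obtain ⟨hyirr, hy1⟩ := gauss_iter_irrational hirr hx1 (m-1)
    obtain ⟨hPm, hPn⟩ := hP
    rw [mem_P_iter_iff hyirr hy1, ← Function.iterate_add_apply,
      show n - m + (m-1) = n - 1 from by omega] at hPn
    refine ⟨⟨?_, hirr⟩, ?_, hirr⟩
    · rw [mem_P_iter_iff hirr hx1]; exact hPm
    · rw [mem_P_iter_iff hirr hx1]; exact hPn

lemma vol_inter_irr (T : Set ℝ) : volume (T ∩ {x | Irrational x}) = volume T := by
  apply measure_inter_conull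
  have h : {x : ℝ | Irrational x}ᶜ = Set.range ((↑) : ℚ → ℝ) := by
    ext x
    simp [Irrational]
  rw [h]
  exact (Set.countable_range _).measure_zero _

end CFAux

theorem cfSet_pairwise_almost_independent :
    ∃ c : ℝ, 1 < c ∧ ∀ m n : ℕ, Odd m → Odd n → 1 ≤ m → m < n →
      volume (cfSet m m ∩ cfSet n n) <
        ENNReal.ofReal c * volume (cfSet m m) * volume (cfSet n n) := by
  classical
  refine ⟨32, by norm_num, ?_⟩
  intro m n _ _ hm hmn
  have hm' : (0:ℝ) < (m:ℝ) + 1 := by positivity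
  have hn' : (0:ℝ) < (n:ℝ) + 1 := by positivity
  -- lower bounds for volumes of the cfSets
  have hlow : ∀ k : ℕ, 1 ≤ k → ENNReal.ofReal (2⁻¹ * ((k:ℝ)+1)⁻¹) ≤ volume (cfSet k k) := by
    intro k hk
    have hA1 := CFAux.A_subset k
    have hAm : MeasurableSet (Set.Ioo (0:ℝ) ((k:ℝ)+1)⁻¹) := measurableSet_Ioo
    rw [CFAux.cfSet_eq k k hk, CFAux.vol_inter_irr]
    calc ENNReal.ofReal (2⁻¹ * ((k:ℝ)+1)⁻¹)
        = ENNReal.ofReal 2⁻¹ * ENNReal.ofReal ((k:ℝ)+1)⁻¹ := by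
          rw [← ENNReal.ofReal_mul (by norm_num)]
      _ = ENNReal.ofReal 2⁻¹ * volume (Set.Ioo (0:ℝ) ((k:ℝ)+1)⁻¹) := by
          rw [Real.volume_Ioo, sub_zero]
      _ ≤ CFAux.mu (Set.Ioo (0:ℝ) ((k:ℝ)+1)⁻¹) := CFAux.half_vol_le_mu hAm hA1
      _ = CFAux.mu (CFAux.P^[k-1] (Set.Ioo (0:ℝ) ((k:ℝ)+1)⁻¹)) :=
          (CFAux.mu_P_iter hAm hA1 (k-1)).symm
      _ ≤ volume (CFAux.P^[k-1] (Set.Ioo (0:ℝ) ((k:ℝ)+1)⁻¹)) :=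
          CFAux.mu_le_vol (CFAux.P_iter_meas hAm _) (CFAux.P_iter_subset hA1 _)
  -- upper bound on the intersection
  have hub : volume (cfSet m m ∩ cfSet n n)
      ≤ ENNReal.ofReal (4 * (((m:ℝ)+1)⁻¹ * ((n:ℝ)+1)⁻¹)) := by
    have hAn1 := CFAux.A_subset n
    have hAm1 := CFAux.A_subset m
    have hAnm : MeasurableSet (Set.Ioo (0:ℝ) ((n:ℝ)+1)⁻¹) := measurableSet_Ioo
    have hAmm : MeasurableSet (Set.Ioo (0:ℝ) ((m:ℝ)+1)⁻¹) := measurableSet_Ioo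
    rw [CFAux.inter_eq hm hmn, CFAux.vol_inter_irr]
    set C := CFAux.P^[n-m-1] (Set.Ioo (0:ℝ) ((n:ℝ)+1)⁻¹) with hC
    have hCm : MeasurableSet C := CFAux.P_iter_meas hAnm _
    have hC1 : C ⊆ Set.Ioo 0 1 := CFAux.P_iter_subset hAn1 _
    have hPneq : CFAux.P^[n-m] (Set.Ioo (0:ℝ) ((n:ℝ)+1)⁻¹) = CFAux.P C := by
      rw [hC, ← Function.iterate_succ_apply' CFAux.P]
      congr 1
      omega
    rw [hPneq]
    set D := Set.Ioo (0:ℝ) ((m:ℝ)+1)⁻¹ ∩ CFAux.P C with hD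
    have hDm : MeasurableSet D := hAmm.inter (CFAux.P_meas hCm)
    have hD1 : D ⊆ Set.Ioo 0 1 := fun y hy => hAm1 hy.1
    have step1 : volume (CFAux.P^[m-1] D) ≤ ENNReal.ofReal 2 * CFAux.mu D := by
      have hv := CFAux.vol_le_two_mu (CFAux.P_iter_meas hDm (m-1)) (CFAux.P_iter_subset hD1 (m-1))
      rwa [CFAux.mu_P_iter hDm hD1] at hv
    have step2 : CFAux.mu D ≤ ENNReal.ofReal ((m:ℝ)+1)⁻¹ * volume C :=
      CFAux.key_bound hCm hC1 m hm
    have step3 : volume C ≤ ENNReal.ofReal 2 * ENNReal.ofReal ((n:ℝ)+1)⁻¹ := by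
      calc volume C ≤ ENNReal.ofReal 2 * CFAux.mu C := CFAux.vol_le_two_mu hCm hC1
        _ = ENNReal.ofReal 2 * CFAux.mu (Set.Ioo (0:ℝ) ((n:ℝ)+1)⁻¹) := by
            rw [hC, CFAux.mu_P_iter hAnm hAn1]
        _ ≤ ENNReal.ofReal 2 * volume (Set.Ioo (0:ℝ) ((n:ℝ)+1)⁻¹) :=
            mul_le_mul_right (CFAux.mu_le_vol hAnm hAn1) _
        _ = ENNReal.ofReal 2 * ENNReal.ofReal ((n:ℝ)+1)⁻¹ := by
            rw [Real.volume_Ioo, sub_zero]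
    calc volume (CFAux.P^[m-1] D) ≤ ENNReal.ofReal 2 * CFAux.mu D := step1
      _ ≤ ENNReal.ofReal 2 * (ENNReal.ofReal ((m:ℝ)+1)⁻¹ * volume C) :=
          mul_le_mul_right step2 _
      _ ≤ ENNReal.ofReal 2 * (ENNReal.ofReal ((m:ℝ)+1)⁻¹ *
          (ENNReal.ofReal 2 * ENNReal.ofReal ((n:ℝ)+1)⁻¹)) := by
          exact mul_le_mul_right (mul_le_mul_right step3 _) _
      _ = ENNReal.ofReal (4 * (((m:ℝ)+1)⁻¹ * ((n:ℝ)+1)⁻¹)) := by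
          rw [← ENNReal.ofReal_mul (by norm_num), ← ENNReal.ofReal_mul (by positivity),
            ← ENNReal.ofReal_mul (by norm_num)]
          congr 1
          ring
  -- conclude
  have hp : (0:ℝ) < ((m:ℝ)+1)⁻¹ * ((n:ℝ)+1)⁻¹ := by positivity
  have hstrict : ENNReal.ofReal (4 * (((m:ℝ)+1)⁻¹ * ((n:ℝ)+1)⁻¹))
      < ENNReal.ofReal (8 * (((m:ℝ)+1)⁻¹ * ((n:ℝ)+1)⁻¹)) := by
    rw [ENNReal.ofReal_lt_ofReal_iff (by positivity)]
    nlinarith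
  have hrhs : ENNReal.ofReal (8 * (((m:ℝ)+1)⁻¹ * ((n:ℝ)+1)⁻¹))
      ≤ ENNReal.ofReal 32 * volume (cfSet m m) * volume (cfSet n n) := by
    calc ENNReal.ofReal (8 * (((m:ℝ)+1)⁻¹ * ((n:ℝ)+1)⁻¹))
        = ENNReal.ofReal 32 * ENNReal.ofReal (2⁻¹ * ((m:ℝ)+1)⁻¹)
            * ENNReal.ofReal (2⁻¹ * ((n:ℝ)+1)⁻¹) := by
          rw [← ENNReal.ofReal_mul (by norm_num), ← ENNReal.ofReal_mul (by positivity)]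
          congr 1
          ring
      _ ≤ ENNReal.ofReal 32 * volume (cfSet m m) * volume (cfSet n n) := by
          exact mul_le_mul' (mul_le_mul' le_rfl (hlow m hm)) (hlow n (by omega))
  calc volume (cfSet m m ∩ cfSet n n)
      ≤ ENNReal.ofReal (4 * (((m:ℝ)+1)⁻¹ * ((n:ℝ)+1)⁻¹)) := hub
    _ < ENNReal.ofReal (8 * (((m:ℝ)+1)⁻¹ * ((n:ℝ)+1)⁻¹)) := hstrict
    _ ≤ ENNReal.ofReal 32 * volume (cfSet m m) * volume (cfSet n n) := hrhs
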